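/- Let R be a ring with 1 and A an n×n matrix over R with symmetric characteristic polynomial p(x) = s-det(xI − A). Write n·(xI − A)*(xI − A) = p(x)·I + D_0 + D_1 x + ⋯ + D_n x^n with uniquely determined matrices D_0,…,D_n over R (so D_k is the coefficient matrix of x^k in n·(xI − A)*(xI − A) − p(x)·I). Then every entry of every D_k, 0 ≤ k ≤ n, lies in the additive subgroup [R,R] of R generated by all commutators [r,s] = rs − sr. -/

import Mathlib

open Polynomial in
/-- The preadjoint `A*` of an `n × n` matrix `A` over a (possibly noncommutative) ring `R`:
its `(r, s)` entry is the sum, over all permutations `τ, ρ` of `Fin n` with `τ s = s` and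
`ρ s = r`, of `sgn ρ` times the ordered product
`a_{τ(1),ρ(τ(1))} ⋯ a_{τ(s-1),ρ(τ(s-1))} · a_{τ(s+1),ρ(τ(s+1))} ⋯ a_{τ(n),ρ(τ(n))}`
(the factor at position `s` is omitted). -/
def Matrix.preadjoint {n : ℕ} {R : Type*} [Ring R] (A : Matrix (Fin n) (Fin n) R) :
    Matrix (Fin n) (Fin n) R :=
  fun r s =>
    ∑ τ : Equiv.Perm (Fin n), ∑ ρ : Equiv.Perm (Fin n),
      if τ s = s ∧ ρ s = r then
        ((Equiv.Perm.sign ρ : ℤ)) •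
          (((List.finRange n).filter (fun k => k ≠ s)).map
            (fun k => A (τ k) (ρ (τ k)))).prod
      else 0

open Polynomial in
/-- The characteristic matrix `x·I - A` of `A`, as a matrix over `R[x]`. -/
noncomputable def Matrix.charMat {n : ℕ} {R : Type*} [Ring R] (A : Matrix (Fin n) (Fin n) R) :
    Matrix (Fin n) (Fin n) R[X] :=
  (X : R[X]) • (1 : Matrix (Fin n) (Fin n) R[X]) - A.map C

/-- The symmetric determinant `s-det A = tr(A* · A) = tr(A · A*)`. -/
def Matrix.sdet {n : ℕ} {R : Type*} [Ring R] (A : Matrix (Fin n) (Fin n) R) : R :=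
  Matrix.trace (A.preadjoint * A)

open Polynomial in
/-- The symmetric characteristic polynomial `p(x) = s-det(x·I - A) ∈ R[x]`. -/
noncomputable def Matrix.sCharPoly {n : ℕ} {R : Type*} [Ring R] (A : Matrix (Fin n) (Fin n) R) : R[X] :=
  A.charMat.sdet


open Finset Equiv Equiv.Perm

section Helpers

variable {S : Type*} [Ring S]

/-- The additive subgroup generated by commutators. -/
private def Kc (S : Type*) [Ring S] : AddSubgroup S :=
  AddSubgroup.closure {z : S | ∃ r s : S, z = r * s - s * r}

private def qm (S : Type*) [Ring S] : S →+ S ⧸ Kc S := QuotientAddGroup.mk' (Kc S)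

private lemma qm_eq_zero_iff (x : S) : qm S x = 0 ↔ x ∈ Kc S :=
  QuotientAddGroup.eq_zero_iff x

private lemma qm_mul_comm (a b : S) : qm S (a * b) = qm S (b * a) := by
  rw [← sub_eq_zero, ← map_sub, qm_eq_zero_iff]
  exact AddSubgroup.subset_closure ⟨a, b, rfl⟩

private lemma qm_rotate_one (l : List S) : qm S ((l.rotate 1).prod) = qm S l.prod := by
  cases l with
  | nil => simp
  | cons a t =>
    have h1 : ((a :: t).rotate 1).prod = t.prod * a := by
      simp [List.rotate_cons_succ]
    rw [h1, List.prod_cons]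
    exact (qm_mul_comm _ _).symm

private lemma qm_rotate (l : List S) (p : ℕ) : qm S ((l.rotate p).prod) = qm S l.prod := by
  induction p with
  | zero => simp
  | succ p ih =>
    have : l.rotate (p + 1) = (l.rotate p).rotate 1 := by rw [List.rotate_rotate]
    rw [this, qm_rotate_one, ih]

end Helpers

section PermList

variable {n : ℕ}

private noncomputable def permOfList (L : List (Fin n)) (h : L.length = n) (hd : L.Nodup) :
    Equiv.Perm (Fin n) :=
  Equiv.ofBijective (fun m => L.get (Fin.cast h.symm m))
    (Finite.injective_iff_bijective.mp
      ((List.nodup_iff_injective_get.mp hd).comp (fun a b hab => by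
        simpa [Fin.ext_iff] using hab)))

private def lstP (σ : Equiv.Perm (Fin n)) : List (Fin n) := (List.finRange n).map σ

private lemma lstP_length (σ : Equiv.Perm (Fin n)) : (lstP σ).length = n := by simp [lstP]

private lemma lstP_nodup (σ : Equiv.Perm (Fin n)) : (lstP σ).Nodup :=
  (List.nodup_finRange n).map σ.injective

private lemma lstP_getElem (σ : Equiv.Perm (Fin n)) (i : ℕ) (h : i < (lstP σ).length) :
    (lstP σ)[i] = σ ⟨i, by simpa [lstP_length] using h⟩ := by
  simp only [lstP, List.getElem_map, List.getElem_finRange]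
  congr 1

private lemma lstP_permOfList (L : List (Fin n)) (h : L.length = n) (hd : L.Nodup) :
    lstP (permOfList L h hd) = L := by
  apply List.ext_getElem (by simp [lstP_length, h])
  intro i h1 h2
  rw [lstP_getElem]
  simp [permOfList, Equiv.ofBijective_apply]

private lemma lstP_mul (σ π : Equiv.Perm (Fin n)) : lstP (σ * π) = (lstP π).map σ := by
  simp [lstP, List.map_map, Function.comp_def]

private lemma lstP_finRotate {m : ℕ} :
    lstP (finRotate (m + 1)) = (List.finRange (m + 1)).rotate 1 := by
  apply List.ext_getElem (by simp [lstP_length])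
  intro i h1 h2
  rw [lstP_getElem, List.getElem_rotate, List.getElem_finRange]
  rw [finRotate_succ_apply, Fin.ext_iff, Fin.add_def]
  simp [lstP_length] at h1
  simp [h1]

private lemma lstP_mul_finRotate {m : ℕ} (σ : Equiv.Perm (Fin (m + 1))) :
    lstP (σ * finRotate (m + 1)) = (lstP σ).rotate 1 := by
  rw [lstP_mul, lstP_finRotate, List.map_rotate]
  rfl

open Fin.NatCast in
private lemma finRotate_pow_apply {m : ℕ} : ∀ (p : ℕ) (x : Fin (m + 1)),
    ((finRotate (m + 1)) ^ p) x = x + (p : Fin (m + 1)) := by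
  intro p
  induction p with
  | zero => simp
  | succ p ih =>
    intro x
    rw [pow_succ, Equiv.Perm.mul_apply, finRotate_succ_apply, ih]
    push_cast
    abel

private lemma lstP_mul_finRotate_pow {m : ℕ} (σ : Equiv.Perm (Fin (m + 1))) (p : ℕ) :
    lstP (σ * (finRotate (m + 1)) ^ p) = (lstP σ).rotate p := by
  induction p with
  | zero => simp
  | succ p ih =>
    have : σ * finRotate (m + 1) ^ (p + 1) = (σ * finRotate (m + 1) ^ p) * finRotate (m + 1) := by
      rw [pow_succ, mul_assoc]
    rw [this, lstP_mul_finRotate, ih, List.rotate_rotate]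

end PermList

section LsSection

variable {n : ℕ}

private def Ls (s : Fin n) : List (Fin n) :=
  ((List.finRange n).filter (fun k => k ≠ s)) ++ [s]

private lemma mem_filter_ne {s k : Fin n}
    (hk : k ∈ (List.finRange n).filter (fun k => k ≠ s)) : k ≠ s := by
  simpa using (List.mem_filter.mp hk).2

private lemma finRange_split (s : Fin n) :
    List.finRange n = (List.finRange n).take s ++ s :: (List.finRange n).drop (s + 1) := by
  conv_lhs => rw [← List.take_append_drop (s : ℕ) (List.finRange n)]
  congr 1
  rw [List.drop_eq_getElem_cons (by simp [s.isLt])]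
  congr 1
  simp [List.getElem_finRange]

private lemma filter_ne_eq (s : Fin n) :
    (List.finRange n).filter (fun k => k ≠ s) =
      (List.finRange n).take s ++ (List.finRange n).drop (s + 1) := by
  have hsplit := finRange_split s
  have hnd : ((List.finRange n).take s ++ s :: (List.finRange n).drop (s + 1)).Nodup := by
    rw [← hsplit]; exact List.nodup_finRange n
  have hsT : s ∉ (List.finRange n).take s := fun h =>
    (List.disjoint_of_nodup_append hnd) h List.mem_cons_self
  have hsD : s ∉ (List.finRange n).drop (s + 1) :=
    (List.nodup_cons.mp (List.nodup_append.mp hnd).2.1).1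
  conv_lhs => rw [hsplit]
  rw [List.filter_append, List.filter_cons]
  have h1 : ((fun k => decide (k ≠ s)) s) = false := by simp
  rw [if_neg (by simp)]
  rw [List.filter_eq_self.mpr (fun a ha => by
    simp only [decide_eq_true_iff]; rintro rfl; exact hsT ha)]
  rw [List.filter_eq_self.mpr (fun a ha => by
    simp only [decide_eq_true_iff]; rintro rfl; exact hsD ha)]

private lemma Ls_length (s : Fin n) : (Ls s).length = n := by
  have h := congrArg List.length (finRange_split s)
  simp only [List.length_finRange, List.length_append, List.length_cons] at h
  simp only [Ls, filter_ne_eq s, List.length_append, List.length_singleton]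
  omega

private lemma Ls_nodup (s : Fin n) : (Ls s).Nodup := by
  rw [Ls, List.nodup_append]
  refine ⟨(List.nodup_finRange n).filter _, List.nodup_singleton s, ?_⟩
  intro a ha b hb
  simp only [List.mem_singleton] at hb
  subst hb
  exact mem_filter_ne ha

private noncomputable def κp (s : Fin n) : Equiv.Perm (Fin n) :=
  permOfList (Ls s) (Ls_length s) (Ls_nodup s)

private lemma lstP_κp (s : Fin n) : lstP (κp s) = Ls s :=
  lstP_permOfList _ _ _

private lemma κp_apply (s : Fin n) (x : Fin n) :
    κp s x = (Ls s).get (Fin.cast (Ls_length s).symm x) := rfl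

private lemma filter_ne_length {m : ℕ} (s : Fin (m + 1)) :
    ((List.finRange (m + 1)).filter (fun k => k ≠ s)).length = m := by
  have := Ls_length s
  simp only [Ls, List.length_append, List.length_singleton] at this
  omega

private lemma κp_last {m : ℕ} (s : Fin (m + 1)) : κp s (Fin.last m) = s := by
  rw [κp_apply]
  simp only [List.get_eq_getElem, Ls]
  rw [List.getElem_append_right (by rw [filter_ne_length s]; simp [Fin.last, Fin.cast])]
  simp [filter_ne_length s, Fin.last]

end LsSection

section Main

open Finset

variable {n : ℕ} {S : Type*} [Ring S]

private def wd (B : Matrix (Fin n) (Fin n) S) (g : Fin n → Fin n) (σ : Equiv.Perm (Fin n)) : S :=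
  ((lstP σ).map (fun i => B i (g i))).prod

private def gf (s : Fin n) (ρ : Equiv.Perm (Fin n)) (j : Fin n) : Fin n → Fin n :=
  fun i => if i = s then j else ρ i

private lemma ident (B : Matrix (Fin n) (Fin n) S) (s j : Fin n) (τ ρ : Equiv.Perm (Fin n))
    (hτ : τ s = s) :
    (((List.finRange n).filter (fun k => k ≠ s)).map (fun k => B (τ k) (ρ (τ k)))).prod * B s j
      = wd B (gf s ρ j) (τ * κp s) := by
  set E := (List.finRange n).filter (fun k => k ≠ s) with hE
  set v : Fin n → S := fun i => B i (gf s ρ j i) with hv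
  have h1 : lstP (τ * κp s) = (E.map τ) ++ [s] := by
    rw [lstP_mul, lstP_κp, Ls, List.map_append, List.map_singleton, hτ]
  unfold wd
  rw [← hv, h1, List.map_append, List.prod_append, List.map_singleton, List.prod_singleton]
  have hvs : v s = B s j := by simp [hv, gf]
  rw [hvs]
  have hmaps : List.map v (List.map (⇑τ) E) = List.map (fun k => B (τ k) (ρ (τ k))) E := by
    rw [List.map_map]
    apply List.map_congr_left
    intro k hk
    have hks : k ≠ s := mem_filter_ne hk
    have hτk : τ k ≠ s := fun h => hks (τ.injective (h.trans hτ.symm))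
    simp [hv, gf, Function.comp, hτk]
  rw [hmaps]

private lemma stepA (B : Matrix (Fin n) (Fin n) S) (r j : Fin n) :
    (B.preadjoint * B) r j
      = ∑ s : Fin n, ∑ ρ : Equiv.Perm (Fin n),
          if ρ s = r then
            ((Equiv.Perm.sign ρ : ℤ)) •
              (∑ τ ∈ Finset.univ.filter (fun τ : Equiv.Perm (Fin n) => τ s = s),
                wd B (gf s ρ j) (τ * κp s))
          else 0 := by
  rw [Matrix.mul_apply]
  apply Finset.sum_congr rfl
  intro s _
  show (B.preadjoint r s) * B s j = _
  simp only [Matrix.preadjoint]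
  simp only [Finset.sum_mul]
  rw [Finset.sum_comm]
  apply Finset.sum_congr rfl
  intro ρ _
  by_cases hρ : ρ s = r
  · rw [if_pos hρ]
    have key : ∀ τ : Equiv.Perm (Fin n),
        (if τ s = s ∧ ρ s = r then
          ((Equiv.Perm.sign ρ : ℤ)) •
            (((List.finRange n).filter (fun k => k ≠ s)).map
              (fun k => B (τ k) (ρ (τ k)))).prod
        else 0) * B s j
        = if τ s = s then
            ((Equiv.Perm.sign ρ : ℤ)) • wd B (gf s ρ j) (τ * κp s) else 0 := by
      intro τ
      by_cases hτ : τ s = s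
      · rw [if_pos ⟨hτ, hρ⟩, if_pos hτ, smul_mul_assoc, ident B s j τ ρ hτ]
      · rw [if_neg (fun h => hτ h.1), if_neg hτ, zero_mul]
    rw [Finset.sum_congr rfl (fun τ _ => key τ), ← Finset.sum_filter, Finset.smul_sum]
  · rw [if_neg hρ]
    apply Finset.sum_eq_zero
    intro τ _
    rw [if_neg (fun h => hρ h.2), zero_mul]

end Main


theorem Equiv.Perm.inv_apply_self {α : Type*} (f : Equiv.Perm α) (x : α) : f⁻¹ (f x) = x :=
  f.symm_apply_apply x

theorem Equiv.Perm.apply_inv_self {α : Type*} (f : Equiv.Perm α) (x : α) : f (f⁻¹ x) = x :=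
  f.apply_symm_apply x

section Reindex

open Finset

variable {S : Type*} [Ring S]

open Fin.NatCast in
private lemma rot_pow_apply {m : ℕ} (p : Fin (m + 1)) (x : Fin (m + 1)) :
    ((finRotate (m + 1)) ^ (p : ℕ)) x = x + p := by
  rw [finRotate_pow_apply, Fin.cast_val_eq_self]

private lemma rot_pow_inv_apply {m : ℕ} (p : Fin (m + 1)) (x : Fin (m + 1)) :
    (((finRotate (m + 1)) ^ (p : ℕ))⁻¹) x = x - p := by
  have h := rot_pow_apply p (x - p)
  rw [sub_add_cancel] at h
  conv_lhs => rw [← h]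
  rw [Equiv.Perm.inv_apply_self]

private lemma reindex1 {m : ℕ} {M : Type*} [AddCommMonoid M] (s : Fin (m + 1))
    (F : Equiv.Perm (Fin (m + 1)) → M) :
    ∑ τ ∈ Finset.univ.filter (fun τ : Equiv.Perm (Fin (m + 1)) => τ s = s),
      ∑ p : Fin (m + 1), F (τ * κp s * (finRotate (m + 1)) ^ (p : ℕ))
    = ∑ σ : Equiv.Perm (Fin (m + 1)), F σ := by
  rw [← Finset.sum_product']
  refine Finset.sum_nbij'
    (fun x => x.1 * κp s * (finRotate (m + 1)) ^ ((x.2 : Fin (m + 1)) : ℕ))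
    (fun σ => (σ * ((finRotate (m + 1)) ^ (((Fin.last m - σ⁻¹ s) : Fin (m + 1)) : ℕ))⁻¹ * (κp s)⁻¹,
        Fin.last m - σ⁻¹ s))
    (fun a _ => Finset.mem_univ _) ?_ ?_ ?_ (fun a _ => rfl)
  · intro σ _
    rw [Finset.mem_product, Finset.mem_filter]
    refine ⟨⟨Finset.mem_univ _, ?_⟩, Finset.mem_univ _⟩
    have h1 : (κp s)⁻¹ s = Fin.last m := by
      rw [Equiv.Perm.inv_eq_iff_eq, κp_last]
    show (σ * _ * (κp s)⁻¹) s = s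
    rw [Equiv.Perm.mul_apply, Equiv.Perm.mul_apply, h1, rot_pow_inv_apply, sub_sub_cancel,
      Equiv.Perm.apply_inv_self]
  · intro a ha
    rw [Finset.mem_product, Finset.mem_filter] at ha
    obtain ⟨⟨-, hτ⟩, -⟩ := ha
    obtain ⟨τ, p⟩ := a
    simp only at hτ ⊢
    have hτi : τ⁻¹ s = s := by rw [Equiv.Perm.inv_eq_iff_eq, hτ]
    have hκ : (κp s)⁻¹ s = Fin.last m := by
      rw [Equiv.Perm.inv_eq_iff_eq, κp_last]
    have hp : (τ * κp s * (finRotate (m + 1)) ^ (p : ℕ))⁻¹ s = Fin.last m - p := by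
      rw [mul_inv_rev, mul_inv_rev, Equiv.Perm.mul_apply, Equiv.Perm.mul_apply, hτi, hκ,
        rot_pow_inv_apply]
    have hp2 : Fin.last m - (τ * κp s * (finRotate (m + 1)) ^ (p : ℕ))⁻¹ s = p := by
      rw [hp, sub_sub_cancel]
    rw [Prod.ext_iff]
    refine ⟨?_, hp2⟩
    show τ * κp s * _ ^ (p : ℕ) *
        ((finRotate (m + 1)) ^ ((Fin.last m - (τ * κp s * _ ^ (p : ℕ))⁻¹ s : Fin (m + 1)) : ℕ))⁻¹ *
        (κp s)⁻¹ = τ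
    rw [hp2]
    group
  · intro σ _
    simp only
    rw [mul_assoc, mul_assoc]
    simp [mul_assoc]

private lemma reindex2 {m : ℕ} {M : Type*} [AddCommMonoid M]
    (F : Fin (m + 1) → Equiv.Perm (Fin (m + 1)) → M) :
    ∑ s : Fin (m + 1),
      ∑ τ ∈ Finset.univ.filter (fun τ : Equiv.Perm (Fin (m + 1)) => τ s = s), F s (τ * κp s)
    = ∑ σ : Equiv.Perm (Fin (m + 1)), F (σ (Fin.last m)) σ := by
  have h1 : ∀ s : Fin (m + 1),
      ∑ τ ∈ Finset.univ.filter (fun τ : Equiv.Perm (Fin (m + 1)) => τ s = s), F s (τ * κp s)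
      = ∑ σ ∈ Finset.univ.filter (fun σ : Equiv.Perm (Fin (m + 1)) => σ (Fin.last m) = s),
          F s σ := by
    intro s
    refine Finset.sum_nbij' (fun τ => τ * κp s) (fun σ => σ * (κp s)⁻¹) ?_ ?_ ?_ ?_ ?_
    · intro τ hτ
      rw [Finset.mem_filter] at hτ ⊢
      refine ⟨Finset.mem_univ _, ?_⟩
      rw [Equiv.Perm.mul_apply, κp_last, hτ.2]
    · intro σ hσ
      rw [Finset.mem_filter] at hσ ⊢
      refine ⟨Finset.mem_univ _, ?_⟩
      have hκ : (κp s)⁻¹ s = Fin.last m := by rw [Equiv.Perm.inv_eq_iff_eq, κp_last]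
      rw [Equiv.Perm.mul_apply, hκ, hσ.2]
    · intro τ _; group
    · intro σ _; group
    · intro τ _; rfl
  rw [Finset.sum_congr rfl (fun s _ => h1 s)]
  have h3 : ∀ s : Fin (m + 1),
      ∑ σ ∈ Finset.univ.filter (fun σ : Equiv.Perm (Fin (m + 1)) => σ (Fin.last m) = s), F s σ
      = ∑ σ : Equiv.Perm (Fin (m + 1)), if σ (Fin.last m) = s then F s σ else 0 :=
    fun s => Finset.sum_filter _ _
  rw [Finset.sum_congr rfl (fun s _ => h3 s), Finset.sum_comm]
  apply Finset.sum_congr rfl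
  intro σ _
  rw [Finset.sum_ite_eq Finset.univ (σ (Fin.last m)) (fun s => F s σ)]
  simp

end Reindex

section MainQ

open Finset Polynomial

variable {S : Type*} [Ring S]

private noncomputable def Tg {n : ℕ} (B : Matrix (Fin n) (Fin n) S) (g : Fin n → Fin n) :
    S ⧸ Kc S :=
  ∑ σ : Equiv.Perm (Fin n), qm S (wd B g σ)

private lemma qm_entry {n : ℕ} (B : Matrix (Fin n) (Fin n) S) (r j : Fin n) :
    qm S ((B.preadjoint * B) r j)
      = ∑ s : Fin n, ∑ ρ : Equiv.Perm (Fin n),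
          if ρ s = r then
            ((Equiv.Perm.sign ρ : ℤ)) •
              (∑ τ ∈ Finset.univ.filter (fun τ : Equiv.Perm (Fin n) => τ s = s),
                qm S (wd B (gf s ρ j) (τ * κp s)))
          else 0 := by
  rw [stepA B r j, map_sum]
  refine Finset.sum_congr rfl fun s _ => ?_
  rw [map_sum]
  refine Finset.sum_congr rfl fun ρ _ => ?_
  rw [apply_ite (qm S), map_zero, map_zsmul, map_sum]

private lemma qm_wd_rot {m : ℕ} (B : Matrix (Fin (m + 1)) (Fin (m + 1)) S)
    (g : Fin (m + 1) → Fin (m + 1)) (σ : Equiv.Perm (Fin (m + 1))) (p : ℕ) :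
    qm S (wd B g (σ * (finRotate (m + 1)) ^ p)) = qm S (wd B g σ) := by
  unfold wd
  rw [lstP_mul_finRotate_pow, List.map_rotate]
  exact qm_rotate _ _

private lemma smul_entry {m : ℕ} (B : Matrix (Fin (m + 1)) (Fin (m + 1)) S) (r j : Fin (m + 1)) :
    (m + 1) • qm S ((B.preadjoint * B) r j)
      = ∑ s : Fin (m + 1), ∑ ρ : Equiv.Perm (Fin (m + 1)),
          if ρ s = r then ((Equiv.Perm.sign ρ : ℤ)) • Tg B (gf s ρ j) else 0 := by
  rw [qm_entry, Finset.smul_sum]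
  refine Finset.sum_congr rfl fun s _ => ?_
  rw [Finset.smul_sum]
  refine Finset.sum_congr rfl fun ρ _ => ?_
  by_cases hρ : ρ s = r
  · rw [if_pos hρ, if_pos hρ, smul_comm]
    congr 1
    have hτp : ∀ τ : Equiv.Perm (Fin (m + 1)),
        (m + 1) • qm S (wd B (gf s ρ j) (τ * κp s))
        = ∑ p : Fin (m + 1), qm S (wd B (gf s ρ j) (τ * κp s * (finRotate (m + 1)) ^ (p : ℕ))) := by
      intro τ
      rw [Finset.sum_congr rfl (fun p _ => qm_wd_rot B _ _ _), Finset.sum_const,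
        Finset.card_univ, Fintype.card_fin]
    rw [Finset.smul_sum, Finset.sum_congr rfl (fun τ _ => hτp τ)]
    exact reindex1 s (fun σ => qm S (wd B (gf s ρ j) σ))
  · rw [if_neg hρ, if_neg hρ, smul_zero]

private lemma gf_of_apply {n : ℕ} (s j : Fin n) (ρ : Equiv.Perm (Fin n)) (h : ρ s = j) :
    gf s ρ j = ⇑ρ := by
  funext i
  unfold gf
  split
  · next hi => rw [hi, h]
  · rfl

private lemma qm_trace {m : ℕ} (B : Matrix (Fin (m + 1)) (Fin (m + 1)) S) :
    qm S (Matrix.trace (B.preadjoint * B))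
      = ∑ ρ : Equiv.Perm (Fin (m + 1)), ((Equiv.Perm.sign ρ : ℤ)) • Tg B ⇑ρ := by
  rw [Matrix.trace, map_sum]
  have h1 : ∀ t : Fin (m + 1),
      qm S ((B.preadjoint * B).diag t)
      = ∑ s : Fin (m + 1), ∑ ρ : Equiv.Perm (Fin (m + 1)),
          if ρ s = t then
            ((Equiv.Perm.sign ρ : ℤ)) •
              (∑ τ ∈ Finset.univ.filter (fun τ : Equiv.Perm (Fin (m + 1)) => τ s = s),
                qm S (wd B ⇑ρ (τ * κp s)))
          else 0 := by
    intro t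
    rw [Matrix.diag_apply, qm_entry B t t]
    refine Finset.sum_congr rfl fun s _ => Finset.sum_congr rfl fun ρ _ => ?_
    by_cases h : ρ s = t
    · rw [if_pos h, if_pos h, gf_of_apply s t ρ h]
    · rw [if_neg h, if_neg h]
  rw [Finset.sum_congr rfl (fun t _ => h1 t), Finset.sum_comm]
  have h2 : ∀ s : Fin (m + 1),
      (∑ t : Fin (m + 1), ∑ ρ : Equiv.Perm (Fin (m + 1)),
        if ρ s = t then
          ((Equiv.Perm.sign ρ : ℤ)) •
            (∑ τ ∈ Finset.univ.filter (fun τ : Equiv.Perm (Fin (m + 1)) => τ s = s),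
              qm S (wd B ⇑ρ (τ * κp s)))
        else 0)
      = ∑ ρ : Equiv.Perm (Fin (m + 1)),
          ((Equiv.Perm.sign ρ : ℤ)) •
            (∑ τ ∈ Finset.univ.filter (fun τ : Equiv.Perm (Fin (m + 1)) => τ s = s),
              qm S (wd B ⇑ρ (τ * κp s))) := by
    intro s
    rw [Finset.sum_comm]
    refine Finset.sum_congr rfl fun ρ _ => ?_
    rw [Finset.sum_ite_eq Finset.univ (ρ s)]
    simp
  rw [Finset.sum_congr rfl (fun s _ => h2 s), Finset.sum_comm]
  refine Finset.sum_congr rfl fun ρ _ => ?_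
  rw [← Finset.smul_sum]
  congr 1
  exact reindex2 (fun s σ => qm S (wd B ⇑ρ σ))

private lemma main_qm {m : ℕ} (B : Matrix (Fin (m + 1)) (Fin (m + 1)) S) (r j : Fin (m + 1)) :
    (m + 1) • qm S ((B.preadjoint * B) r j)
      = if r = j then qm S (Matrix.trace (B.preadjoint * B)) else 0 := by
  rw [smul_entry]
  by_cases hrj : r = j
  · subst hrj
    rw [if_pos rfl, qm_trace]
    have hg : ∀ (s : Fin (m + 1)) (ρ : Equiv.Perm (Fin (m + 1))),
        (if ρ s = r then ((Equiv.Perm.sign ρ : ℤ)) • Tg B (gf s ρ r) else 0)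
        = if ρ s = r then ((Equiv.Perm.sign ρ : ℤ)) • Tg B ⇑ρ else 0 := by
      intro s ρ
      by_cases h : ρ s = r
      · rw [if_pos h, if_pos h, gf_of_apply s r ρ h]
      · rw [if_neg h, if_neg h]
    rw [Finset.sum_congr rfl fun s _ => Finset.sum_congr rfl fun ρ _ => hg s ρ,
      Finset.sum_comm]
    refine Finset.sum_congr rfl fun ρ _ => ?_
    have hcond : ∀ s : Fin (m + 1),
        (if ρ s = r then ((Equiv.Perm.sign ρ : ℤ)) • Tg B ⇑ρ else 0)
        = if s = ρ⁻¹ r then ((Equiv.Perm.sign ρ : ℤ)) • Tg B ⇑ρ else 0 := by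
      intro s
      refine if_congr ?_ rfl rfl
      constructor
      · intro h; rw [← h, Equiv.Perm.inv_apply_self]
      · intro h; rw [h, Equiv.Perm.apply_inv_self]
    rw [Finset.sum_congr rfl fun s _ => hcond s, Finset.sum_ite_eq' Finset.univ (ρ⁻¹ r)]
    simp
  · rw [if_neg hrj, ← Finset.sum_product']
    refine Finset.sum_involution
      (fun a _ => (a.2⁻¹ j, a.2 * Equiv.swap a.1 (a.2⁻¹ j))) ?_ ?_ (fun a _ => Finset.mem_univ _) ?_
    · rintro ⟨s, ρ⟩ -
      simp only
      by_cases hc : ρ s = r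
      · have hss' : s ≠ ρ⁻¹ j := by
          intro h
          apply hrj
          rw [← hc, h, Equiv.Perm.apply_inv_self]
        have hcond' : (ρ * Equiv.swap s (ρ⁻¹ j)) (ρ⁻¹ j) = r := by
          rw [Equiv.Perm.mul_apply, Equiv.swap_apply_right, hc]
        have hgf : gf (ρ⁻¹ j) (ρ * Equiv.swap s (ρ⁻¹ j)) j = gf s ρ j := by
          funext i
          unfold gf
          by_cases h1 : i = ρ⁻¹ j
          · rw [if_pos h1, if_neg (h1 ▸ fun h => hss' h.symm)]
            rw [h1, Equiv.Perm.apply_inv_self]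
          · rw [if_neg h1]
            by_cases h2 : i = s
            · rw [if_pos h2, h2, Equiv.Perm.mul_apply, Equiv.swap_apply_left,
                Equiv.Perm.apply_inv_self]
            · rw [if_neg h2, Equiv.Perm.mul_apply,
                Equiv.swap_apply_of_ne_of_ne h2 h1]
        have hsign : ((Equiv.Perm.sign (ρ * Equiv.swap s (ρ⁻¹ j)) : ℤˣ) : ℤ)
            = -((Equiv.Perm.sign ρ : ℤˣ) : ℤ) := by
          rw [Equiv.Perm.sign_mul, Equiv.Perm.sign_swap hss']
          simp
        rw [if_pos hc, if_pos hcond', hgf, hsign, neg_smul]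
        exact add_neg_cancel _
      · have hc' : ¬((ρ * Equiv.swap s (ρ⁻¹ j)) (ρ⁻¹ j) = r) := by
          rw [Equiv.Perm.mul_apply, Equiv.swap_apply_right]
          exact hc
        rw [if_neg hc, if_neg hc', add_zero]
    · rintro ⟨s, ρ⟩ - hf
      intro heq
      simp only at hf heq
      have hc : ρ s = r := by
        by_contra h
        rw [if_neg h] at hf
        exact hf rfl
      have hss' : s ≠ ρ⁻¹ j := by
        intro h
        apply hrj
        rw [← hc, h, Equiv.Perm.apply_inv_self]
      exact hss' (congrArg Prod.fst heq).symm
    · rintro ⟨s, ρ⟩ -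
      simp only
      have h1 : (ρ * Equiv.swap s (ρ⁻¹ j)) s = j := by
        rw [Equiv.Perm.mul_apply, Equiv.swap_apply_left, Equiv.Perm.apply_inv_self]
      have h2 : (ρ * Equiv.swap s (ρ⁻¹ j))⁻¹ j = s := by
        rw [Equiv.Perm.inv_eq_iff_eq]
        exact h1.symm
      rw [Prod.ext_iff]
      refine ⟨h2, ?_⟩
      simp only [h2]
      rw [Equiv.swap_comm (ρ⁻¹ j) s, mul_assoc, Equiv.swap_mul_self, mul_one]

private lemma main_mem {n : ℕ} (B : Matrix (Fin n) (Fin n) S) (r j : Fin n) :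
    (n • (B.preadjoint * B)) r j
      - (if r = j then Matrix.trace (B.preadjoint * B) else 0) ∈ Kc S := by
  rcases n with _ | m
  · exact r.elim0
  · rw [← qm_eq_zero_iff, map_sub]
    have h1 : ((m + 1) • (B.preadjoint * B)) r j = (m + 1) • ((B.preadjoint * B) r j) := rfl
    rw [h1, map_nsmul, main_qm, apply_ite (qm S), map_zero, sub_self]

end MainQ

section CoeffLemma

open Polynomial

private lemma coeff_mem_Kc {R : Type*} [Ring R] (f : R[X]) (hf : f ∈ Kc R[X]) (k : ℕ) :
    f.coeff k ∈ Kc R := by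
  refine AddSubgroup.closure_induction ?_ ?_ ?_ ?_ hf
  · rintro x ⟨a, b, rfl⟩
    rw [Polynomial.coeff_sub, Polynomial.coeff_mul, Polynomial.coeff_mul]
    have hswap : ∑ x ∈ Finset.HasAntidiagonal.antidiagonal k, b.coeff x.1 * a.coeff x.2
        = ∑ x ∈ Finset.HasAntidiagonal.antidiagonal k, b.coeff x.2 * a.coeff x.1 := by
      rw [← Finset.HasAntidiagonal.map_swap_antidiagonal, Finset.sum_map]
      simp
    rw [hswap, ← Finset.sum_sub_distrib]
    apply AddSubgroup.sum_mem
    intro c _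
    exact AddSubgroup.subset_closure ⟨a.coeff c.1, b.coeff c.2, rfl⟩
  · simpa using (Kc R).zero_mem
  · intro x y _ _ hx hy
    rw [Polynomial.coeff_add]
    exact (Kc R).add_mem hx hy
  · intro x _ hx
    rw [Polynomial.coeff_neg]
    exact (Kc R).neg_mem hx

end CoeffLemma

open Polynomial in
/-- Theorem 2.2 (first part, left version): write
`n·(xI - A)*(xI - A) = p(x)·I + D₀ + D₁x + ⋯ + Dₙxⁿ`,
where `p(x)` is the symmetric characteristic polynomial of `A`; then each entry of each
coefficient matrix `D_k` (`0 ≤ k ≤ n`) lies in the additive subgroup `[R,R]` of `R`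
generated by all commutators `rs - sr`. -/
theorem coeff_preadjoint_mul_charMat_mem_commutatorSubgroup
    {n : ℕ} {R : Type*} [Ring R] (A : Matrix (Fin n) (Fin n) R)
    (D : ℕ → Matrix (Fin n) (Fin n) R)
    (hD : ∀ k, ∀ i j : Fin n,
      D k i j = ((n • (A.charMat.preadjoint * A.charMat)
        - A.sCharPoly • (1 : Matrix (Fin n) (Fin n) R[X])) i j).coeff k) :
    ∀ k ≤ n, ∀ i j : Fin n,
      D k i j ∈ AddSubgroup.closure {z : R | ∃ r s : R, z = r * s - s * r} := by
  intro k _ i j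
  rw [hD]
  have hmem : ((n • (A.charMat.preadjoint * A.charMat)
      - A.sCharPoly • (1 : Matrix (Fin n) (Fin n) R[X])) i j) ∈ Kc (R[X]) := by
    have h1 := main_mem A.charMat i j
    have h2 : (n • (A.charMat.preadjoint * A.charMat)
        - A.sCharPoly • (1 : Matrix (Fin n) (Fin n) R[X])) i j
        = (n • (A.charMat.preadjoint * A.charMat)) i j
          - (if i = j then Matrix.trace (A.charMat.preadjoint * A.charMat) else 0) := by
      rw [Matrix.sub_apply]
      congr 1
      rw [Matrix.smul_apply, Matrix.one_apply, smul_eq_mul, mul_ite, mul_one, mul_zero]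
      rfl
    rw [h2]
    exact h1
  exact coeff_mem_Kc _ hmem k
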